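/- Let l = p, A ∈ ℂ^{n×n}, H ∈ ℂ^{n×p}, C ∈ ℂ^{p×n}, with C·A^d·H = 0 for 0 ≤ d < r and C·A^r·H invertible, and let L = H·(C·A^r·H)^{-1}. Then every eigenvalue of A − L·C·A^{r+1} is either zero or an invariant zero of (A,H,C); consequently, if (A,H,C) has no invariant zeros then A − L·C·A^{r+1} is nilpotent, and if all invariant zeros have modulus strictly less than 1 then the spectral radius of A − L·C·A^{r+1} is strictly less than 1. -/

import Mathlib

/-- `z` is an invariant zero of `(A,H,C)` if the Rosenbrock matrix
`[[zI − A, −H],[C, 0]]` is singular. -/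
def IsInvariantZero {n p : ℕ} (A : Matrix (Fin n) (Fin n) ℂ)
    (H : Matrix (Fin n) (Fin p) ℂ) (C : Matrix (Fin p) (Fin n) ℂ) (z : ℂ) : Prop :=
  (Matrix.fromBlocks (z • (1 : Matrix (Fin n) (Fin n) ℂ) - A) (-H) C
      (0 : Matrix (Fin p) (Fin p) ℂ)).det = 0

open Matrix Polynomial in
private lemma myMemSpec {m : ℕ} (M : Matrix (Fin m) (Fin m) ℂ) (z : ℂ) :
    z ∈ spectrum ℂ M ↔ (z • (1 : Matrix (Fin m) (Fin m) ℂ) - M).det = 0 := by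
  rw [spectrum.mem_iff, Matrix.isUnit_iff_isUnit_det, isUnit_iff_ne_zero, not_not,
    Algebra.algebraMap_eq_smul_one]

open Matrix Polynomial in
private lemma myEvalCharpoly {m : ℕ} (M : Matrix (Fin m) (Fin m) ℂ) (z : ℂ) :
    M.charpoly.eval z = (z • (1 : Matrix (Fin m) (Fin m) ℂ) - M).det := by
  rw [Matrix.charpoly, _root_.eval_det, Matrix.matPolyEquiv_charmatrix]
  simp [Algebra.algebraMap_eq_smul_one, smul_one_eq_diagonal]

open Matrix Polynomial in
private lemma myNilp {m : ℕ} (F : Matrix (Fin m) (Fin m) ℂ)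
    (h : ∀ z ∈ spectrum ℂ F, z = 0) : IsNilpotent F := by
  have hsp : F.charpoly.Splits := IsAlgClosed.splits F.charpoly
  have hroots : ∀ z ∈ F.charpoly.roots, z = 0 := by
    intro z hz
    apply h
    rw [myMemSpec, ← myEvalCharpoly]
    exact (Polynomial.mem_roots'.mp hz).2
  have hprod := hsp.eq_prod_roots_of_monic F.charpoly_monic
  have hmap : F.charpoly.roots.map (fun a => X - Polynomial.C a)
      = F.charpoly.roots.map (fun _ => (X : ℂ[X])) := by
    apply Multiset.map_congr rfl
    intro a ha
    rw [hroots a ha, map_zero, sub_zero]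
  rw [hmap, Multiset.map_const', Multiset.prod_replicate] at hprod
  refine ⟨Multiset.card F.charpoly.roots, ?_⟩
  have := Matrix.aeval_self_charpoly F
  rw [hprod, map_pow, aeval_X] at this
  exact this

open Matrix Polynomial in
private lemma mySpecRad {m : ℕ} (F : Matrix (Fin m) (Fin m) ℂ)
    (h : ∀ z ∈ spectrum ℂ F, ‖z‖₊ < 1) : spectralRadius ℂ F < 1 := by
  have hfin : (spectrum ℂ F).Finite := Matrix.finite_spectrum F
  set c : NNReal := hfin.toFinset.sup fun z => ‖z‖₊ with hc
  have hc1 : c < 1 := by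
    rw [hc, Finset.sup_lt_iff (by norm_num : (⊥ : NNReal) < 1)]
    intro z hz
    exact h z (hfin.mem_toFinset.mp hz)
  have hle : spectralRadius ℂ F ≤ (c : ENNReal) := by
    rw [spectralRadius]
    exact iSup₂_le fun z hz => ENNReal.coe_le_coe.mpr
      (Finset.le_sup (hfin.mem_toFinset.mpr hz))
  calc spectralRadius ℂ F ≤ (c : ENNReal) := hle
    _ < 1 := by exact_mod_cast hc1

open Matrix Polynomial in
private lemma myCF {n p r : ℕ}
    (A : Matrix (Fin n) (Fin n) ℂ) (H : Matrix (Fin n) (Fin p) ℂ)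
    (C : Matrix (Fin p) (Fin n) ℂ)
    (hCd : ∀ d < r, C * A ^ d * H = 0)
    (hinv : IsUnit (C * A ^ r * H)) :
    C * (A - H * (C * A ^ r * H)⁻¹ * C * A ^ (r + 1)) ^ (r + 1) = 0 := by
  set M := C * A ^ r * H with hM
  set F := A - H * M⁻¹ * C * A ^ (r + 1) with hF
  have hMM : M * M⁻¹ = 1 :=
    Matrix.mul_nonsing_inv M ((Matrix.isUnit_iff_isUnit_det M).mp hinv)
  have step : ∀ d, C * A ^ d * F
      = C * A ^ (d + 1) - (C * A ^ d * H) * (M⁻¹ * (C * A ^ (r + 1))) := by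
    intro d
    simp only [hF, Matrix.mul_sub, pow_succ, Matrix.mul_assoc]
  have key : ∀ d ≤ r, C * F ^ d = C * A ^ d := by
    intro d hd
    induction d with
    | zero => simp
    | succ d ih =>
      rw [pow_succ, ← Matrix.mul_assoc, ih (Nat.le_of_succ_le hd), step,
        hCd d hd, Matrix.zero_mul, sub_zero]
  have last : C * A ^ r * F = 0 := by
    rw [step r, ← hM, ← Matrix.mul_assoc, hMM, Matrix.one_mul, sub_self]
  rw [pow_succ, ← Matrix.mul_assoc, key r le_rfl, last]

open Matrix Polynomial in
private lemma myPart1 {n p r : ℕ}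
    (A : Matrix (Fin n) (Fin n) ℂ) (H : Matrix (Fin n) (Fin p) ℂ)
    (C : Matrix (Fin p) (Fin n) ℂ)
    (hCF : C * (A - H * (C * A ^ r * H)⁻¹ * C * A ^ (r + 1)) ^ (r + 1) = 0)
    (z : ℂ) (hz0 : z ≠ 0)
    (hz : z ∈ spectrum ℂ (A - H * (C * A ^ r * H)⁻¹ * C * A ^ (r + 1))) :
    IsInvariantZero A H C z := by
  unfold IsInvariantZero
  set M := C * A ^ r * H with hM
  set F := A - H * M⁻¹ * C * A ^ (r + 1) with hF
  rw [myMemSpec] at hz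
  obtain ⟨v, hv0, hv⟩ := (Matrix.exists_mulVec_eq_zero_iff).mpr hz
  have hFv : F *ᵥ v = z • v := by
    have : (z • (1 : Matrix (Fin n) (Fin n) ℂ)) *ᵥ v - F *ᵥ v = 0 := by
      rw [← Matrix.sub_mulVec]; exact hv
    have h1 : (z • (1 : Matrix (Fin n) (Fin n) ℂ)) *ᵥ v = z • v := by
      rw [Matrix.smul_mulVec, Matrix.one_mulVec]
    rw [h1, sub_eq_zero] at this
    exact this.symm
  have hFk : ∀ k : ℕ, F ^ k *ᵥ v = z ^ k • v := by
    intro k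
    induction k with
    | zero => simp
    | succ k ih =>
      rw [pow_succ', pow_succ', ← Matrix.mulVec_mulVec, ih, Matrix.mulVec_smul, hFv,
        smul_smul, mul_comm]
  have hCv : C *ᵥ v = 0 := by
    have h0 : (C * F ^ (r + 1)) *ᵥ v = 0 := by rw [hCF]; simp
    rw [← Matrix.mulVec_mulVec, hFk, Matrix.mulVec_smul] at h0
    have hzp : z ^ (r + 1) ≠ 0 := pow_ne_zero _ hz0
    exact (smul_eq_zero.mp h0).resolve_left hzp
  set u : Fin p → ℂ := -((M⁻¹ * (C * A ^ (r + 1))) *ᵥ v) with hu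
  rw [← Matrix.exists_mulVec_eq_zero_iff]
  refine ⟨Sum.elim v u, ?_, ?_⟩
  · intro h
    apply hv0
    funext i
    exact congrFun h (Sum.inl i)
  · rw [Matrix.fromBlocks_mulVec]
    simp only [Sum.elim_comp_inl, Sum.elim_comp_inr]
    have hrow2 : C *ᵥ v + (0 : Matrix (Fin p) (Fin p) ℂ) *ᵥ u = 0 := by
      rw [hCv, Matrix.zero_mulVec, add_zero]
    have hneg : (-H) *ᵥ u = (H * M⁻¹ * C * A ^ (r + 1)) *ᵥ v := by
      rw [hu, Matrix.neg_mulVec, Matrix.mulVec_neg, neg_neg, Matrix.mulVec_mulVec]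
      simp only [Matrix.mul_assoc]
    have hrow1 : (z • (1 : Matrix (Fin n) (Fin n) ℂ) - A) *ᵥ v + (-H) *ᵥ u = 0 := by
      rw [hneg, ← Matrix.add_mulVec]
      have : z • (1 : Matrix (Fin n) (Fin n) ℂ) - A + H * M⁻¹ * C * A ^ (r + 1)
          = z • (1 : Matrix (Fin n) (Fin n) ℂ) - F := by rw [hF]; abel
      rw [this, hv]
    rw [hrow1, hrow2]
    ext (i | j) <;> simp

theorem stmt_14 (n p r : ℕ)
    (A : Matrix (Fin n) (Fin n) ℂ) (H : Matrix (Fin n) (Fin p) ℂ)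
    (C : Matrix (Fin p) (Fin n) ℂ)
    (hCd : ∀ d < r, C * A ^ d * H = 0)
    (hinv : IsUnit (C * A ^ r * H))
    (L : Matrix (Fin n) (Fin p) ℂ)
    (hL : L = H * (C * A ^ r * H)⁻¹) :
    (∀ z ∈ spectrum ℂ (A - L * C * A ^ (r + 1)), z = 0 ∨ IsInvariantZero A H C z) ∧
    ((∀ z : ℂ, ¬ IsInvariantZero A H C z) → IsNilpotent (A - L * C * A ^ (r + 1))) ∧
    ((∀ z : ℂ, IsInvariantZero A H C z → ‖z‖ < 1) →
      spectralRadius ℂ (A - L * C * A ^ (r + 1)) < 1) := by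
  subst hL
  have hCF := myCF A H C hCd hinv
  have h1 : ∀ z ∈ spectrum ℂ (A - H * (C * A ^ r * H)⁻¹ * C * A ^ (r + 1)),
      z = 0 ∨ IsInvariantZero A H C z := by
    intro z hz
    by_cases hz0 : z = 0
    · exact Or.inl hz0
    · exact Or.inr (myPart1 A H C hCF z hz0 hz)
  refine ⟨h1, ?_, ?_⟩
  · intro hno
    apply myNilp
    intro z hz
    rcases h1 z hz with h | h
    · exact h
    · exact absurd h (hno z)
  · intro hlt
    apply mySpecRad
    intro z hz
    have habs : ‖z‖ < 1 := by
      rcases h1 z hz with h | h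
      · simp [h]
      · exact hlt z h
    rw [← NNReal.coe_lt_coe, coe_nnnorm, NNReal.coe_one]
    exact habs
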